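/- arXiv:1303.6447 — 3 statements merged into one kernel-verified Lean document; each statement's English description precedes it below -/
import Mathlib

section
/- Let u be a subset of {1,…,p}. Then Var(E[Y | X_i, i ∈ u]) = Cov(Y, Y^u), i.e. the numerator of the closed Sobol index equals the covariance between the output and its pick-freeze replication. -/
open MeasureTheory ProbabilityTheory Filter Finset
open scoped NNReal ENNReal Topology

noncomputable section

namespace SobolPaper

variable {p : ℕ} {𝒳 : Fin p → Type*} [∀ i, MeasurableSpace (𝒳 i)]

/-- The pick-freeze probability space: two independent copies of the input vector
`X = (X₁,…,X_p)` (with independent coordinates) are modeled canonically as the two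
canonical projections of the product of two copies of the product measure. -/
def pfMeasure (ν : ∀ i, Measure (𝒳 i)) : Measure ((∀ i, 𝒳 i) × (∀ i, 𝒳 i)) :=
  (Measure.pi ν).prod (Measure.pi ν)

instance (ν : ∀ i, Measure (𝒳 i)) [∀ i, IsProbabilityMeasure (ν i)] :
    IsProbabilityMeasure (pfMeasure ν) := by
  unfold pfMeasure; infer_instance

/-- The output `Y = f(X)`. -/
def Yout (f : (∀ i, 𝒳 i) → ℝ) (ω : (∀ i, 𝒳 i) × (∀ i, 𝒳 i)) : ℝ := f ω.1

/-- The pick-freeze input `X^u`: coordinates in `u` are frozen (taken from `X`),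
the others are resampled (taken from the independent copy `X'`). -/
def Xpf (u : Finset (Fin p)) (ω : (∀ i, 𝒳 i) × (∀ i, 𝒳 i)) : ∀ i, 𝒳 i :=
  fun i => if i ∈ u then ω.1 i else ω.2 i

/-- The pick-freeze replication `Y^u = f(X^u)`. -/
def Ypf (f : (∀ i, 𝒳 i) → ℝ) (u : Finset (Fin p)) (ω : (∀ i, 𝒳 i) × (∀ i, 𝒳 i)) : ℝ :=
  f (Xpf u ω)

/-- Covariance of two real random variables. -/
def cov {α : Type*} [MeasurableSpace α] (μ : Measure α) (g h : α → ℝ) : ℝ :=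
  ∫ a, g a * h a ∂μ - (∫ a, g a ∂μ) * ∫ a, h a ∂μ

/-- The closed Sobol index `S^u_Cl = Cov(Y, Y^u) / Var(Y)`. -/
def SCl (ν : ∀ i, Measure (𝒳 i)) (f : (∀ i, 𝒳 i) → ℝ) (u : Finset (Fin p)) : ℝ :=
  cov (pfMeasure ν) (Yout f) (Ypf f u) / variance (Yout f) (pfMeasure ν)

private lemma variance_congr_ae {α : Type*} [MeasurableSpace α] {μ : Measure α} {X Y : α → ℝ}
    (h : X =ᵐ[μ] Y) : variance X μ = variance Y μ := by
  unfold ProbabilityTheory.variance ProbabilityTheory.evariance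
  rw [integral_congr_ae h]
  congr 1
  exact lintegral_congr_ae (h.mono fun ω hω => by simp only [hω])

private lemma integral_comp_mp {α β : Type*} [MeasurableSpace α] [MeasurableSpace β]
    {μ : Measure α} {ν : Measure β} {T : α → β} (hT : MeasurePreserving T μ ν)
    {h : β → ℝ} (hh : AEStronglyMeasurable h ν) :
    ∫ a, h (T a) ∂μ = ∫ b, h b ∂ν := by
  rw [← hT.map_eq] at hh
  rw [← hT.map_eq]
  exact (integral_map hT.measurable.aemeasurable hh).symm

/-- `Var(E[Y | X_i, i ∈ u]) = Cov(Y, Y^u)`. -/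
theorem statement0
    {p : ℕ} {𝒳 : Fin p → Type*} [∀ i, MeasurableSpace (𝒳 i)]
    (ν : ∀ i, Measure (𝒳 i)) [∀ i, IsProbabilityMeasure (ν i)]
    (f : (∀ i, 𝒳 i) → ℝ) (hf : Measurable f)
    (hY2 : MemLp (Yout f) 2 (pfMeasure ν))
    (hVar : variance (Yout f) (pfMeasure ν) ≠ 0)
    (u : Finset (Fin p)) :
    variance
      ((pfMeasure ν)[Yout f |
        MeasurableSpace.comap (fun ω : (∀ i, 𝒳 i) × (∀ i, 𝒳 i) =>
          fun i : {i // i ∈ u} => ω.1 i) inferInstance])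
      (pfMeasure ν)
      = cov (pfMeasure ν) (Yout f) (Ypf f u) := by
  classical
  clear hVar
  set μ : Measure ((∀ i, 𝒳 i) × (∀ i, 𝒳 i)) := pfMeasure ν with hμdef
  set π : Measure (∀ i, 𝒳 i) := Measure.pi ν with hπdef
  set πT : Measure (∀ i : {i // i ∈ u}, 𝒳 i) := Measure.pi (fun i => ν i) with hπTdef
  set πC : Measure (∀ i : {i // ¬ i ∈ u}, 𝒳 i) := Measure.pi (fun i => ν i) with hπCdef
  haveI : IsProbabilityMeasure π := by rw [hπdef]; infer_instance
  haveI : IsProbabilityMeasure πT := by rw [hπTdef]; infer_instance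
  haveI : IsProbabilityMeasure πC := by rw [hπCdef]; infer_instance
  set e := MeasurableEquiv.piEquivPiSubtypeProd 𝒳 (fun i => i ∈ u) with hedef
  have he : MeasurePreserving e π (πT.prod πC) := by
    have h := measurePreserving_piEquivPiSubtypeProd ν (fun i => i ∈ u)
    have h1 : (Measure.pi fun i : {i // i ∈ u} => ν i) =
        @Measure.pi _ _ (Subtype.fintype _) _ (fun i : {i // i ∈ u} => ν i) := by
      congr 1 <;> exact Subsingleton.elim _ _
    have h2 : (Measure.pi fun i : {i // ¬ i ∈ u} => ν i) =
        @Measure.pi _ _ (Subtype.fintype _) _ (fun i : {i // ¬ i ∈ u} => ν i) := by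
      congr 1 <;> exact Subsingleton.elim _ _
    rw [hπTdef, hπCdef, hπdef, hedef, h1, h2]
    exact h
  -- basic projections
  set ψT : (∀ i, 𝒳 i) → (∀ i : {i // i ∈ u}, 𝒳 i) := fun x => fun i => x i with hψTdef
  set ψC : (∀ i, 𝒳 i) → (∀ i : {i // ¬ i ∈ u}, 𝒳 i) := fun x => fun i => x i with hψCdef
  have hfstTC : MeasurePreserving (Prod.fst : _ → (∀ i : {i // i ∈ u}, 𝒳 i)) (πT.prod πC) πT :=
    ⟨measurable_fst, by simp⟩
  have hsndTC : MeasurePreserving (Prod.snd : _ → (∀ i : {i // ¬ i ∈ u}, 𝒳 i)) (πT.prod πC) πC :=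
    ⟨measurable_snd, by simp⟩
  have hfst : MeasurePreserving (Prod.fst : _ → (∀ i, 𝒳 i)) μ π :=
    ⟨measurable_fst, by rw [hμdef]; unfold pfMeasure; simp [hπdef]⟩
  have hsnd : MeasurePreserving (Prod.snd : _ → (∀ i, 𝒳 i)) μ π :=
    ⟨measurable_snd, by rw [hμdef]; unfold pfMeasure; simp [hπdef]⟩
  have hψT : MeasurePreserving ψT π πT := hfstTC.comp he
  have hψC : MeasurePreserving ψC π πC := hsndTC.comp he
  -- the conditioning map
  set φ : ((∀ i, 𝒳 i) × (∀ i, 𝒳 i)) → (∀ i : {i // i ∈ u}, 𝒳 i) :=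
    fun ω => fun i => ω.1 i with hφdef
  have hφ : MeasurePreserving φ μ πT := hψT.comp hfst
  -- the pick-freeze map
  have hXpf_eq : Xpf u = fun ω => e.symm (ψT ω.1, ψC ω.2) := by
    funext ω
    funext i
    by_cases h : i ∈ u <;>
      simp [Xpf, hedef, MeasurableEquiv.piEquivPiSubtypeProd, Equiv.piEquivPiSubtypeProd, h,
        hψTdef, hψCdef]
  have hXpf : MeasurePreserving (Xpf u) μ π := by
    rw [hXpf_eq]
    exact (he.symm e).comp (hψT.prod hψC)
  -- key functions
  set F : ((∀ i : {i // i ∈ u}, 𝒳 i) × (∀ i : {i // ¬ i ∈ u}, 𝒳 i)) → ℝ :=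
    fun q => f (e.symm q) with hFdef
  have hFmeas : Measurable F := hf.comp e.symm.measurable
  set g : (∀ i : {i // i ∈ u}, 𝒳 i) → ℝ := fun y => ∫ z, F (y, z) ∂πC with hgdef
  have hgsm : StronglyMeasurable g := hFmeas.stronglyMeasurable.integral_prod_right'
  have hFe : ∀ x, F (e x) = f x := fun x => by simp [hFdef]
  have hFψ : ∀ x, F (ψT x, ψC x) = f x := fun x => hFe x
  -- MemLp facts
  have hfπ2 : MemLp f 2 π := by
    have := (memLp_map_measure_iff hf.stronglyMeasurable.aestronglyMeasurable
      measurable_fst.aemeasurable (μ := μ) (p := 2)).symm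
    rw [hfst.map_eq] at this
    exact this.mp hY2
  have hF2 : MemLp F 2 (πT.prod πC) := hfπ2.comp_measurePreserving (he.symm e)
  have hFint : Integrable F (πT.prod πC) := hF2.integrable one_le_two
  have hgint : Integrable g πT := hFint.integral_prod_left
  -- the triple-product space
  set τ : Measure ((∀ i : {i // i ∈ u}, 𝒳 i) ×
      ((∀ i : {i // ¬ i ∈ u}, 𝒳 i) × (∀ i : {i // ¬ i ∈ u}, 𝒳 i))) :=
    πT.prod (πC.prod πC) with hτdef
  haveI : IsProbabilityMeasure τ := by rw [hτdef]; infer_instance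
  have hΘ : MeasurePreserving (fun ω : (∀ i, 𝒳 i) × (∀ i, 𝒳 i) =>
      (ψT ω.1, (ψC ω.1, ψC ω.2))) μ τ := by
    have h1 : MeasurePreserving (fun ω : (∀ i, 𝒳 i) × (∀ i, 𝒳 i) => (e ω.1, ψC ω.2))
        μ ((πT.prod πC).prod πC) := he.prod hψC
    have h2 := (measurePreserving_prodAssoc πT πC πC).comp h1
    exact h2
  have hproj1 : MeasurePreserving (fun w : (∀ i : {i // i ∈ u}, 𝒳 i) ×
      ((∀ i : {i // ¬ i ∈ u}, 𝒳 i) × (∀ i : {i // ¬ i ∈ u}, 𝒳 i)) => (w.1, w.2.1))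
      τ (πT.prod πC) := (MeasurePreserving.id πT).prod ⟨measurable_fst, by simp⟩
  have hproj2 : MeasurePreserving (fun w : (∀ i : {i // i ∈ u}, 𝒳 i) ×
      ((∀ i : {i // ¬ i ∈ u}, 𝒳 i) × (∀ i : {i // ¬ i ∈ u}, 𝒳 i)) => (w.1, w.2.2))
      τ (πT.prod πC) := (MeasurePreserving.id πT).prod ⟨measurable_snd, by simp⟩
  have hG1 : MemLp (fun w => F (w.1, w.2.1)) 2 τ := hF2.comp_measurePreserving hproj1
  have hG2 : MemLp (fun w => F (w.1, w.2.2)) 2 τ := hF2.comp_measurePreserving hproj2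
  have hH : Integrable (fun w : (∀ i : {i // i ∈ u}, 𝒳 i) ×
      ((∀ i : {i // ¬ i ∈ u}, 𝒳 i) × (∀ i : {i // ¬ i ∈ u}, 𝒳 i)) =>
      F (w.1, w.2.1) * F (w.1, w.2.2)) τ := by
    have h12 : (1 : ℝ≥0∞) / 1 = 1 / 2 + 1 / 2 := by
      rw [one_div, one_div, inv_one, ENNReal.inv_two_add_inv_two]
    have hsmul := MemLp.smul (r := 1) hG2 hG1
    have hint := memLp_one_iff_integrable.mp hsmul
    exact hint.congr (Filter.Eventually.of_forall fun w => by
      simp [Pi.smul_apply, smul_eq_mul, mul_comm])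
  -- Fubini: ∫ g² = ∫ over τ of the product
  have hg_sq_eq : ∀ y, g y * g y = ∫ zz : (∀ i : {i // ¬ i ∈ u}, 𝒳 i) ×
      (∀ i : {i // ¬ i ∈ u}, 𝒳 i), F (y, zz.1) * F (y, zz.2) ∂(πC.prod πC) := by
    intro y
    rw [integral_prod_mul (fun z => F (y, z)) (fun z => F (y, z))]
  have hint_gsq : Integrable (fun y => g y * g y) πT := by
    refine (hH.integral_prod_left).congr ?_
    exact Filter.Eventually.of_forall fun y => (hg_sq_eq y).symm
  have hτ_int_eq : ∫ w, F (w.1, w.2.1) * F (w.1, w.2.2) ∂τ = ∫ y, g y * g y ∂πT := by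
    rw [integral_prod _ hH]
    exact integral_congr_ae (Filter.Eventually.of_forall fun y => (hg_sq_eq y).symm)
  -- ∫ Y·Y^u = ∫ g²
  have hYYpf : ∫ ω, Yout f ω * Ypf f u ω ∂μ = ∫ y, g y * g y ∂πT := by
    have hcomp : ∀ ω : (∀ i, 𝒳 i) × (∀ i, 𝒳 i),
        Yout f ω * Ypf f u ω =
          (fun w : (∀ i : {i // i ∈ u}, 𝒳 i) ×
            ((∀ i : {i // ¬ i ∈ u}, 𝒳 i) × (∀ i : {i // ¬ i ∈ u}, 𝒳 i)) =>
            F (w.1, w.2.1) * F (w.1, w.2.2)) ((ψT ω.1, (ψC ω.1, ψC ω.2))) := by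
      intro ω
      simp only [Yout, Ypf, hXpf_eq]
      rw [hFψ ω.1]
    calc ∫ ω, Yout f ω * Ypf f u ω ∂μ
        = ∫ ω, (fun w : (∀ i : {i // i ∈ u}, 𝒳 i) ×
            ((∀ i : {i // ¬ i ∈ u}, 𝒳 i) × (∀ i : {i // ¬ i ∈ u}, 𝒳 i)) =>
            F (w.1, w.2.1) * F (w.1, w.2.2)) ((ψT ω.1, (ψC ω.1, ψC ω.2))) ∂μ :=
          integral_congr_ae (Filter.Eventually.of_forall hcomp)
      _ = ∫ w, F (w.1, w.2.1) * F (w.1, w.2.2) ∂τ :=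
          integral_comp_mp hΘ (hG1.aestronglyMeasurable.mul hG2.aestronglyMeasurable)
      _ = ∫ y, g y * g y ∂πT := hτ_int_eq
  -- expectations
  have hEY : ∫ ω, Yout f ω ∂μ = ∫ x, f x ∂π :=
    integral_comp_mp hfst hfπ2.aestronglyMeasurable
  have hEYpf : ∫ ω, Ypf f u ω ∂μ = ∫ x, f x ∂π :=
    integral_comp_mp hXpf hfπ2.aestronglyMeasurable
  -- conditional expectation
  have hφmeas : Measurable φ :=
    measurable_pi_lambda _ fun i => (measurable_pi_apply (i : Fin p)).comp measurable_fst
  have hm : MeasurableSpace.comap φ inferInstance ≤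
      (inferInstance : MeasurableSpace ((∀ i, 𝒳 i) × (∀ i, 𝒳 i))) := hφmeas.comap_le
  haveI : SigmaFinite (μ.trim hm) := by
    haveI := isFiniteMeasure_trim (μ := μ) hm
    infer_instance
  have hYint : Integrable (Yout f) μ := hY2.integrable one_le_two
  have hgφint : Integrable (fun ω => g (φ ω)) μ := by
    have := (memLp_one_iff_integrable.mpr hgint).comp_measurePreserving hφ
    exact memLp_one_iff_integrable.mp this
  have hgφm : AEStronglyMeasurable[MeasurableSpace.comap φ inferInstance]
      (fun ω => g (φ ω)) μ := by
    refine StronglyMeasurable.aestronglyMeasurable ?_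
    exact hgsm.comp_measurable (Measurable.of_comap_le le_rfl)
  have hsetint : ∀ s : Set ((∀ i, 𝒳 i) × (∀ i, 𝒳 i)),
      MeasurableSet[MeasurableSpace.comap φ inferInstance] s → μ s < ⊤ →
      ∫ ω in s, g (φ ω) ∂μ = ∫ ω in s, Yout f ω ∂μ := by
    rintro s ⟨t, ht, rfl⟩ -
    -- left side
    have hL : ∫ ω in φ ⁻¹' t, g (φ ω) ∂μ = ∫ y in t, g y ∂πT := by
      rw [← hφ.map_eq]
      exact (setIntegral_map ht
        (by rw [hφ.map_eq]; exact hgsm.aestronglyMeasurable) hφmeas.aemeasurable).symm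
    -- right side
    have hsub : φ ⁻¹' t = Prod.fst ⁻¹' (ψT ⁻¹' t) := rfl
    have hψTt : MeasurableSet (ψT ⁻¹' t) := hψT.measurable ht
    have hR1 : ∫ ω in φ ⁻¹' t, Yout f ω ∂μ = ∫ x in ψT ⁻¹' t, f x ∂π := by
      rw [hsub, ← hfst.map_eq]
      exact (setIntegral_map hψTt
        (by rw [hfst.map_eq]; exact hfπ2.aestronglyMeasurable) measurable_fst.aemeasurable).symm
    have hsub2 : ψT ⁻¹' t = ⇑e ⁻¹' (Prod.fst ⁻¹' t) := rfl
    have hfstt : MeasurableSet (Prod.fst ⁻¹' t :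
        Set ((∀ i : {i // i ∈ u}, 𝒳 i) × (∀ i : {i // ¬ i ∈ u}, 𝒳 i))) :=
      measurable_fst ht
    have hR2 : ∫ x in ψT ⁻¹' t, f x ∂π = ∫ q in Prod.fst ⁻¹' t, F q ∂(πT.prod πC) := by
      rw [hsub2, ← he.map_eq]
      rw [setIntegral_map hfstt
        (by rw [he.map_eq]; exact hF2.aestronglyMeasurable) he.measurable.aemeasurable]
      exact integral_congr_ae (Filter.Eventually.of_forall fun x => (hFe x).symm) |>.symm ▸ rfl
    have hR3 : ∫ q in Prod.fst ⁻¹' t, F q ∂(πT.prod πC) = ∫ y in t, g y ∂πT := by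
      rw [← Set.prod_univ, setIntegral_prod _ (hFint.integrableOn)]
      simp only [Measure.restrict_univ]
      rfl
    rw [hL, hR1, hR2, hR3]
  have hcond : (fun ω => g (φ ω)) =ᵐ[μ]
      μ[Yout f | MeasurableSpace.comap φ inferInstance] :=
    ae_eq_condExp_of_forall_setIntegral_eq hm hYint
      (fun s _ _ => hgφint.integrableOn) hsetint hgφm
  -- MemLp of g∘φ
  have hgsq_int_T : Integrable (fun y => g y ^ 2) πT := by
    refine hint_gsq.congr (Filter.Eventually.of_forall fun y => ?_)
    simp [sq]
  have hgφ2 : MemLp (fun ω => g (φ ω)) 2 μ := by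
    have hg2T : MemLp g 2 πT :=
      (memLp_two_iff_integrable_sq hgsm.aestronglyMeasurable).mpr hgsq_int_T
    exact hg2T.comp_measurePreserving hφ
  -- ∫ (g∘φ)² over μ equals ∫ g² over πT
  have hsq_eq : ∫ ω, (g (φ ω)) ^ 2 ∂μ = ∫ y, g y ^ 2 ∂πT :=
    integral_comp_mp hφ (hgsm.pow 2).aestronglyMeasurable
  have hEgφ : ∫ ω, g (φ ω) ∂μ = ∫ y, g y ∂πT :=
    integral_comp_mp hφ hgsm.aestronglyMeasurable
  -- ∫ g over πT equals ∫ f over π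
  have hEg : ∫ y, g y ∂πT = ∫ x, f x ∂π := by
    have h1 : ∫ x, f x ∂π = ∫ q, F q ∂(πT.prod πC) :=
      (integral_comp_mp (he.symm e) hfπ2.aestronglyMeasurable).symm
    rw [h1, integral_prod _ hFint]
  -- put everything together
  rw [variance_congr_ae (Filter.EventuallyEq.symm hcond), variance_eq_sub hgφ2]
  have h2 : ∫ ω, ((fun ω => g (φ ω)) ^ 2) ω ∂μ = ∫ y, g y * g y ∂πT := by
    simp only [Pi.pow_apply]
    rw [hsq_eq]
    exact integral_congr_ae (Filter.Eventually.of_forall fun y => by simp [pow_two])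
  rw [h2]
  unfold cov
  rw [hYYpf, hEY, hEYpf, hEgφ, hEg, pow_two]

end SobolPaper
end
end

section
/- Assume E(Y) = 0 and Var(Y) = V ≠ 0, fix y > 0, and for an i.i.d. sample (Y_i, Y_i^u), 1 ≤ i ≤ N, set U_i⁺ = Y_i Y_i^u − (S^{u}_{Cl} + y) Y_i² and J_i⁺ = (S^{u}_{Cl} + y) Y_i − Y_i^u. Then P(S^{u}_{N,Cl} ≥ S^{u}_{Cl} + y) ≤ P(Σ_{i=1}^N (U_i⁺ − E(U⁺)) ≥ N yV/2) + P(Σ_{i=1}^N Y_i ≥ N √(yV/2)) + P(Σ_{i=1}^N (−Y_i) ≥ N √(yV/2)) + P(Σ_{i=1}^N J_i⁺ ≥ N √(yV/2)) + P(Σ_{i=1}^N (−J_i⁺) ≥ N √(yV/2)). -/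
open MeasureTheory ProbabilityTheory Filter Finset
open scoped NNReal ENNReal Topology

noncomputable section

namespace SobolPaper

variable {p : ℕ} {𝒳 : Fin p → Type*} [∀ i, MeasurableSpace (𝒳 i)]

/-- First pick-freeze estimator `S^u_{N,Cl}` (case `k = 1`) built from a sample
`W i ω = (Y_i(ω), Y_i^u(ω))`. -/
def SN1 {Ω' : Type*} (W : ℕ → Ω' → ℝ × ℝ) (N : ℕ) (ω : Ω') : ℝ :=
  ((∑ i ∈ Finset.range N, (W i ω).1 * (W i ω).2) / N -
      ((∑ i ∈ Finset.range N, (W i ω).1) / N) * ((∑ i ∈ Finset.range N, (W i ω).2) / N)) /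
    ((∑ i ∈ Finset.range N, (W i ω).1 ^ 2) / N - ((∑ i ∈ Finset.range N, (W i ω).1) / N) ^ 2)

/-- Second pick-freeze estimator `T^u_{N,Cl}` (case `k = 1`) built from a sample
`W i ω = (Y_i(ω), Y_i^u(ω))`. -/
def TN1 {Ω' : Type*} (W : ℕ → Ω' → ℝ × ℝ) (N : ℕ) (ω : Ω') : ℝ :=
  ((∑ i ∈ Finset.range N, (W i ω).1 * (W i ω).2) / N -
      ((∑ i ∈ Finset.range N, ((W i ω).1 + (W i ω).2)) / (2 * N)) ^ 2) /
    ((∑ i ∈ Finset.range N, ((W i ω).1 ^ 2 + (W i ω).2 ^ 2)) / (2 * N) -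
      ((∑ i ∈ Finset.range N, ((W i ω).1 + (W i ω).2)) / (2 * N)) ^ 2)

/- arith lemmas -/
lemma sobol_arith_core (n s1 s2 sA sQ S y V EU : ℝ) (hn : 0 < n)
    (hyV : 0 < y * V) (hEU : EU = -(y * V))
    (hCS : s1 ^ 2 ≤ n * sQ)
    (hdeg : n * sQ = s1 ^ 2 → n * sA = s1 * s2)
    (hSN : S + y ≤ (sA / n - (s1 / n) * (s2 / n)) / (sQ / n - (s1 / n) ^ 2)) :
    n * (y * V / 2) ≤ sA - (S + y) * sQ - n * EU ∨
    n * Real.sqrt (y * V / 2) ≤ s1 ∨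
    n * Real.sqrt (y * V / 2) ≤ -s1 ∨
    n * Real.sqrt (y * V / 2) ≤ (S + y) * s1 - s2 ∨
    n * Real.sqrt (y * V / 2) ≤ -((S + y) * s1 - s2) := by
  have hne : n ≠ 0 := ne_of_gt hn
  by_contra hcon
  push_neg at hcon
  obtain ⟨h1, h2, h3, h4, h5⟩ := hcon
  have hc2 : Real.sqrt (y * V / 2) ^ 2 = y * V / 2 := Real.sq_sqrt (by linarith)
  have hcpos : 0 < Real.sqrt (y * V / 2) := Real.sqrt_pos.mpr (by linarith)
  have hA : n * sA - (S + y) * (n * sQ) < -(n ^ 2 * (y * V / 2)) := by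
    rw [hEU] at h1
    nlinarith [h1]
  have hKey : n ^ 2 * (y * V / 2) < s1 * ((S + y) * s1 - s2) := by
    have hq : 0 ≤ n * sQ - s1 ^ 2 := by linarith
    rcases lt_or_eq_of_le hq with hq | hq
    · have e1 : sQ / n - (s1 / n) ^ 2 = (n * sQ - s1 ^ 2) / n ^ 2 := by
        field_simp
      have e2 : sA / n - (s1 / n) * (s2 / n) = (n * sA - s1 * s2) / n ^ 2 := by
        field_simp
      have hd : 0 < sQ / n - (s1 / n) ^ 2 := by rw [e1]; positivity
      have h6 := (le_div_iff₀ hd).mp hSN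
      rw [e1, e2, ← mul_div_assoc] at h6
      have h7 : (S + y) * (n * sQ - s1 ^ 2) ≤ n * sA - s1 * s2 :=
        (div_le_div_iff_of_pos_right (by positivity)).mp h6
      nlinarith [hA, h7]
    · have hnsA : n * sA = s1 * s2 := hdeg (by linarith)
      have hq2 : n * sQ = s1 ^ 2 := by linarith
      rw [hnsA, hq2] at hA
      nlinarith [hA]
  have hp1 : 0 < (n * Real.sqrt (y * V / 2) - s1) *
      (n * Real.sqrt (y * V / 2) + ((S + y) * s1 - s2)) :=
    mul_pos (by linarith) (by linarith)
  have hp2 : 0 < (n * Real.sqrt (y * V / 2) + s1) *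
      (n * Real.sqrt (y * V / 2) - ((S + y) * s1 - s2)) :=
    mul_pos (by linarith) (by linarith)
  nlinarith [hp1, hp2, hc2, hKey]

lemma sobol_arith (a b : ℕ → ℝ) (N : ℕ) (hN : 0 < N) (S y V EU : ℝ)
    (hyV : 0 < y * V) (hEU : EU = -(y * V))
    (hSN : S + y ≤ ((∑ i ∈ range N, a i * b i) / N -
        ((∑ i ∈ range N, a i) / N) * ((∑ i ∈ range N, b i) / N)) /
      ((∑ i ∈ range N, a i ^ 2) / N - ((∑ i ∈ range N, a i) / N) ^ 2)) :
    (N : ℝ) * (y * V / 2) ≤ ∑ i ∈ range N, (a i * b i - (S + y) * a i ^ 2 - EU) ∨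
    (N : ℝ) * Real.sqrt (y * V / 2) ≤ ∑ i ∈ range N, a i ∨
    (N : ℝ) * Real.sqrt (y * V / 2) ≤ ∑ i ∈ range N, -(a i) ∨
    (N : ℝ) * Real.sqrt (y * V / 2) ≤ ∑ i ∈ range N, ((S + y) * a i - b i) ∨
    (N : ℝ) * Real.sqrt (y * V / 2) ≤ ∑ i ∈ range N, -((S + y) * a i - b i) := by
  have hn : (0 : ℝ) < N := Nat.cast_pos.mpr hN
  have hne : (N : ℝ) ≠ 0 := ne_of_gt hn
  have hsum1 : ∑ i ∈ range N, (a i * b i - (S + y) * a i ^ 2 - EU) =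
      (∑ i ∈ range N, a i * b i) - (S + y) * (∑ i ∈ range N, a i ^ 2) - (N : ℝ) * EU := by
    rw [Finset.sum_sub_distrib, Finset.sum_sub_distrib, ← Finset.mul_sum, Finset.sum_const,
      Finset.card_range, nsmul_eq_mul]
  have hsum3 : ∑ i ∈ range N, -(a i) = -(∑ i ∈ range N, a i) := by
    rw [Finset.sum_neg_distrib]
  have hsum4 : ∑ i ∈ range N, ((S + y) * a i - b i) =
      (S + y) * (∑ i ∈ range N, a i) - ∑ i ∈ range N, b i := by
    rw [Finset.sum_sub_distrib, ← Finset.mul_sum]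
  have hsum5 : ∑ i ∈ range N, -((S + y) * a i - b i) =
      -((S + y) * (∑ i ∈ range N, a i) - ∑ i ∈ range N, b i) := by
    rw [Finset.sum_neg_distrib, hsum4]
  rw [hsum1, hsum3, hsum4, hsum5]
  apply sobol_arith_core (N : ℝ) _ _ _ _ S y V EU hn hyV hEU _ _ hSN
  · have h := Finset.sum_mul_sq_le_sq_mul_sq (range N) a (fun _ => (1 : ℝ))
    simp only [mul_one, one_pow, Finset.sum_const, Finset.card_range, nsmul_eq_mul] at h
    nlinarith [h]
  · intro hq
    have hsum0 : ∑ i ∈ range N, (a i - (∑ j ∈ range N, a j) / N) ^ 2 = 0 := by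
      have expand : ∀ i ∈ range N, (a i - (∑ j ∈ range N, a j) / N) ^ 2 =
          a i ^ 2 - (2 * ((∑ j ∈ range N, a j) / N)) * a i +
            ((∑ j ∈ range N, a j) / N) ^ 2 := fun i _ => by ring
      rw [Finset.sum_congr rfl expand, Finset.sum_add_distrib, Finset.sum_sub_distrib,
        ← Finset.mul_sum, Finset.sum_const, Finset.card_range, nsmul_eq_mul]
      have key : (∑ i ∈ range N, a i ^ 2) -
          (2 * ((∑ j ∈ range N, a j) / N)) * (∑ j ∈ range N, a j) +
          (N : ℝ) * ((∑ j ∈ range N, a j) / N) ^ 2 =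
          ((N : ℝ) * (∑ i ∈ range N, a i ^ 2) - (∑ j ∈ range N, a j) ^ 2) / N := by
        field_simp; ring
      rw [key, hq, sub_self, zero_div]
    have hconst : ∀ i ∈ range N, a i = (∑ j ∈ range N, a j) / N := by
      intro i hi
      have h9 := (Finset.sum_eq_zero_iff_of_nonneg (fun j _ => sq_nonneg _)).mp hsum0 i hi
      have h10 := pow_eq_zero_iff (n := 2) (by norm_num) |>.mp h9
      linarith [sub_eq_zero.mp h10]
    have hsAeq : ∑ i ∈ range N, a i * b i =
        ((∑ j ∈ range N, a j) / N) * (∑ i ∈ range N, b i) := by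
      calc ∑ i ∈ range N, a i * b i
          = ∑ i ∈ range N, ((∑ j ∈ range N, a j) / N) * b i :=
            Finset.sum_congr rfl (fun i hi => by rw [hconst i hi])
        _ = ((∑ j ∈ range N, a j) / N) * (∑ i ∈ range N, b i) := by
            rw [← Finset.mul_sum]
    rw [hsAeq]
    field_simp

/- measure theory aux -/
lemma measurable_Xpf (u : Finset (Fin p)) : Measurable (Xpf (𝒳 := 𝒳) u) := by
  apply measurable_pi_lambda
  intro i
  simp only [Xpf]
  by_cases h : i ∈ u
  · simp only [h, if_true]
    exact (measurable_pi_apply i).comp measurable_fst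
  · simp only [h, if_false]
    exact (measurable_pi_apply i).comp measurable_snd

lemma measurePreserving_Xpf (ν : ∀ i, Measure (𝒳 i)) [∀ i, IsProbabilityMeasure (ν i)]
    (u : Finset (Fin p)) :
    MeasurePreserving (Xpf u) (pfMeasure ν) (Measure.pi ν) := by
  classical
  refine ⟨measurable_Xpf u, ?_⟩
  refine (Measure.pi_eq fun s hs => ?_).symm
  rw [Measure.map_apply (measurable_Xpf u) (MeasurableSet.univ_pi hs)]
  have hpre : Xpf (𝒳 := 𝒳) u ⁻¹' (Set.pi Set.univ s)
      = (Set.pi (↑u) s) ×ˢ (Set.pi ((↑u : Set (Fin p))ᶜ) s) := by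
    ext ω
    simp only [Set.mem_preimage, Set.mem_pi, Set.mem_univ, forall_true_left, Set.mem_prod,
      Set.mem_compl_iff, Finset.mem_coe, Xpf]
    constructor
    · intro h
      exact ⟨fun i hi => by simpa [hi] using h i, fun i hi => by simpa [hi] using h i⟩
    · intro h i
      by_cases hi : i ∈ u
      · simpa [hi] using h.1 i hi
      · simpa [hi] using h.2 i hi
  rw [hpre, pfMeasure, Measure.prod_prod]
  rw [← Set.pi_univ_ite (↑u : Set (Fin p)) s, ← Set.pi_univ_ite ((↑u : Set (Fin p))ᶜ) s,
    Measure.pi_pi, Measure.pi_pi, ← Finset.prod_mul_distrib]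
  refine Finset.prod_congr rfl fun i _ => ?_
  by_cases hi : i ∈ u
  · simp [hi]
  · simp [hi]

/-- Decomposition of the upward deviation probability of `S^u_{N,Cl}`
into five elementary deviation probabilities. -/
theorem statement11
    {p : ℕ} {𝒳 : Fin p → Type*} [∀ i, MeasurableSpace (𝒳 i)]
    (ν : ∀ i, Measure (𝒳 i)) [∀ i, IsProbabilityMeasure (ν i)]
    (f : (∀ i, 𝒳 i) → ℝ) (hf : Measurable f)
    (hY2 : MemLp (Yout f) 2 (pfMeasure ν))
    (hVar : variance (Yout f) (pfMeasure ν) ≠ 0)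
    (u : Finset (Fin p))
    {Ω' : Type*} [MeasurableSpace Ω'] (P : Measure Ω') [IsProbabilityMeasure P]
    (W : ℕ → Ω' → ℝ × ℝ)
    (hindep : iIndepFun W P)
    (hident : ∀ i, IdentDistrib (W i) (fun ω => (Yout f ω, Ypf f u ω)) P (pfMeasure ν))
    (y : ℝ) (hy : 0 < y)
    (hcent : ∫ ω, Yout f ω ∂(pfMeasure ν) = 0)
    (N : ℕ)
    (V S EU : ℝ)
    (hV : V = variance (Yout f) (pfMeasure ν))
    (hS : S = SCl ν f u)
    (hEU : EU = ∫ ω, (Yout f ω * Ypf f u ω - (S + y) * Yout f ω ^ 2) ∂(pfMeasure ν)) :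
    (P {ω' | S + y ≤ SN1 W N ω'}).toReal ≤
      (P {ω' | N * (y * V / 2) ≤
          ∑ i ∈ Finset.range N,
            ((W i ω').1 * (W i ω').2 - (S + y) * (W i ω').1 ^ 2 - EU)}).toReal
      + (P {ω' | N * Real.sqrt (y * V / 2) ≤ ∑ i ∈ Finset.range N, (W i ω').1}).toReal
      + (P {ω' | N * Real.sqrt (y * V / 2) ≤ ∑ i ∈ Finset.range N, -(W i ω').1}).toReal
      + (P {ω' | N * Real.sqrt (y * V / 2) ≤
          ∑ i ∈ Finset.range N, ((S + y) * (W i ω').1 - (W i ω').2)}).toReal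
      + (P {ω' | N * Real.sqrt (y * V / 2) ≤
          ∑ i ∈ Finset.range N, -((S + y) * (W i ω').1 - (W i ω').2)}).toReal := by
  have hVnn : 0 ≤ V := hV ▸ variance_nonneg _ _
  have hVne : V ≠ 0 := fun h => hVar (by rw [← hV, h])
  have hVpos : 0 < V := lt_of_le_of_ne hVnn (Ne.symm hVne)
  have hyV : 0 < y * V := mul_pos hy hVpos
  -- measure preserving maps
  have hfstMP : MeasurePreserving Prod.fst (pfMeasure ν) (Measure.pi ν) :=
    ⟨measurable_fst, by simp [pfMeasure]⟩
  have hXpf := measurePreserving_Xpf ν u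
  -- Memℒp facts
  have hfm2 : MemLp f 2 (Measure.pi ν) := by
    rw [← hfstMP.map_eq]
    exact (memLp_map_measure_iff hf.aestronglyMeasurable measurable_fst.aemeasurable).mpr hY2
  have hYpf2 : MemLp (Ypf f u) 2 (pfMeasure ν) := hfm2.comp_measurePreserving hXpf
  have hintsq : Integrable (fun ω => Yout f ω ^ 2) (pfMeasure ν) := hY2.integrable_sq
  have hintmul : Integrable (fun ω => Yout f ω * Ypf f u ω) (pfMeasure ν) := by
    have h := hYpf2.smul (φ := Yout f) hY2 (r := 1)
      (hpqr := ⟨by simp [ENNReal.inv_two_add_inv_two]⟩)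
    rw [memLp_one_iff_integrable] at h
    exact h
  -- expectation of Ypf is zero
  have hEYpf : ∫ ω, Ypf f u ω ∂(pfMeasure ν) = 0 := by
    have h1 : ∫ ω, Ypf f u ω ∂(pfMeasure ν) = ∫ x, f x ∂(Measure.pi ν) := by
      rw [← hXpf.map_eq, integral_map (measurable_Xpf u).aemeasurable]
      · rfl
      · rw [hXpf.map_eq]; exact hf.aestronglyMeasurable
    have h2 : ∫ ω, Yout f ω ∂(pfMeasure ν) = ∫ x, f x ∂(Measure.pi ν) := by
      rw [← hfstMP.map_eq, integral_map measurable_fst.aemeasurable]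
      · rfl
      · rw [hfstMP.map_eq]; exact hf.aestronglyMeasurable
    rw [h1, ← h2, hcent]
  -- value of EU
  have hsqint : ∫ ω, Yout f ω ^ 2 ∂(pfMeasure ν) = V := by
    have h := variance_eq_sub hY2
    simp only [Pi.pow_apply] at h
    rw [hV, h, hcent]
    norm_num
  have hcov : ∫ ω, Yout f ω * Ypf f u ω ∂(pfMeasure ν) = S * V := by
    have hc : cov (pfMeasure ν) (Yout f) (Ypf f u) =
        ∫ ω, Yout f ω * Ypf f u ω ∂(pfMeasure ν) := by
      rw [cov, hcent]; ring
    rw [← hc, hS, SCl, ← hV, div_mul_cancel₀ _ hVne]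
  have hEU' : EU = -(y * V) := by
    rw [hEU, integral_sub hintmul (hintsq.const_mul _), integral_const_mul, hcov, hsqint]
    ring
  -- case N = 0
  rcases Nat.eq_zero_or_pos N with hN | hN
  · subst hN
    have hle1 : (P {ω' | S + y ≤ SN1 W 0 ω'}).toReal ≤ 1 := by
      rw [← ENNReal.toReal_one]
      exact ENNReal.toReal_mono ENNReal.one_ne_top prob_le_one
    simp only [Nat.cast_zero, zero_mul, Finset.sum_range_zero, le_refl, Set.setOf_true,
      measure_univ, ENNReal.toReal_one]
    linarith
  · -- main case
    have hincl : {ω' | S + y ≤ SN1 W N ω'} ⊆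
        {ω' | (N : ℝ) * (y * V / 2) ≤
            ∑ i ∈ Finset.range N,
              ((W i ω').1 * (W i ω').2 - (S + y) * (W i ω').1 ^ 2 - EU)} ∪
        ({ω' | (N : ℝ) * Real.sqrt (y * V / 2) ≤ ∑ i ∈ Finset.range N, (W i ω').1} ∪
        ({ω' | (N : ℝ) * Real.sqrt (y * V / 2) ≤ ∑ i ∈ Finset.range N, -(W i ω').1} ∪
        ({ω' | (N : ℝ) * Real.sqrt (y * V / 2) ≤
            ∑ i ∈ Finset.range N, ((S + y) * (W i ω').1 - (W i ω').2)} ∪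
        {ω' | (N : ℝ) * Real.sqrt (y * V / 2) ≤
            ∑ i ∈ Finset.range N, -((S + y) * (W i ω').1 - (W i ω').2)}))) := by
      intro ω hω
      have h := sobol_arith (fun i => (W i ω).1) (fun i => (W i ω).2) N hN S y V EU hyV hEU' hω
      simp only [Set.mem_union, Set.mem_setOf_eq]
      exact h
    have hch : P {ω' | S + y ≤ SN1 W N ω'} ≤
        P {ω' | (N : ℝ) * (y * V / 2) ≤
            ∑ i ∈ Finset.range N,
              ((W i ω').1 * (W i ω').2 - (S + y) * (W i ω').1 ^ 2 - EU)} +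
        (P {ω' | (N : ℝ) * Real.sqrt (y * V / 2) ≤ ∑ i ∈ Finset.range N, (W i ω').1} +
        (P {ω' | (N : ℝ) * Real.sqrt (y * V / 2) ≤ ∑ i ∈ Finset.range N, -(W i ω').1} +
        (P {ω' | (N : ℝ) * Real.sqrt (y * V / 2) ≤
            ∑ i ∈ Finset.range N, ((S + y) * (W i ω').1 - (W i ω').2)} +
        P {ω' | (N : ℝ) * Real.sqrt (y * V / 2) ≤
            ∑ i ∈ Finset.range N, -((S + y) * (W i ω').1 - (W i ω').2)}))) := by
      refine le_trans (measure_mono hincl) ?_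
      refine le_trans (measure_union_le _ _) ?_
      refine add_le_add le_rfl ?_
      refine le_trans (measure_union_le _ _) ?_
      refine add_le_add le_rfl ?_
      refine le_trans (measure_union_le _ _) ?_
      refine add_le_add le_rfl ?_
      exact measure_union_le _ _
    calc (P {ω' | S + y ≤ SN1 W N ω'}).toReal
        ≤ (P {ω' | (N : ℝ) * (y * V / 2) ≤
            ∑ i ∈ Finset.range N,
              ((W i ω').1 * (W i ω').2 - (S + y) * (W i ω').1 ^ 2 - EU)} +
          (P {ω' | (N : ℝ) * Real.sqrt (y * V / 2) ≤ ∑ i ∈ Finset.range N, (W i ω').1} +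
          (P {ω' | (N : ℝ) * Real.sqrt (y * V / 2) ≤ ∑ i ∈ Finset.range N, -(W i ω').1} +
          (P {ω' | (N : ℝ) * Real.sqrt (y * V / 2) ≤
              ∑ i ∈ Finset.range N, ((S + y) * (W i ω').1 - (W i ω').2)} +
          P {ω' | (N : ℝ) * Real.sqrt (y * V / 2) ≤
              ∑ i ∈ Finset.range N, -((S + y) * (W i ω').1 - (W i ω').2)})))).toReal :=
          ENNReal.toReal_mono (by finiteness) hch
      _ = _ := by
          rw [ENNReal.toReal_add (measure_ne_top _ _) (by finiteness),
            ENNReal.toReal_add (measure_ne_top _ _) (by finiteness),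
            ENNReal.toReal_add (measure_ne_top _ _) (by finiteness),
            ENNReal.toReal_add (measure_ne_top _ _) (by finiteness)]
          ring



end SobolPaper
end
end

section
/- Assume E(Y) = 0, Var(Y) = V ≠ 0, fix y > 0 with S^{u}_{Cl} + y − 1 ≥ 0, and for an i.i.d. sample (Y_i, Y_i^u), 1 ≤ i ≤ N, set K_i⁺ = Y_i Y_i^u − (S^{u}_{Cl} + y)(Y_i² + (Y_i^u)²)/2 and Z_i = (Y_i + Y_i^u)/2. Then P(T^{u}_{N,Cl} ≥ S^{u}_{Cl} + y) ≤ P(Σ_{i=1}^N (K_i⁺ − E(K⁺)) ≥ N yV/2) + P(Σ_{i=1}^N Z_i ≥ N √(yV/(2(S^{u}_{Cl}+y−1)))) + P(Σ_{i=1}^N (−Z_i) ≥ N √(yV/(2(S^{u}_{Cl}+y−1)))). -/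
open MeasureTheory ProbabilityTheory Filter Finset
open scoped NNReal ENNReal Topology

noncomputable section

namespace SobolPaper

variable {p : ℕ} {𝒳 : Fin p → Type*} [∀ i, MeasurableSpace (𝒳 i)]

lemma core_real (c yV r : ℝ) (N : ℕ) (a b : ℕ → ℝ)
    (hc : 1 ≤ c) (hyV : 0 < yV) (hr : r = Real.sqrt (yV / (2 * (c - 1))))
    (h : c ≤ ((∑ i ∈ Finset.range N, a i * b i) / N -
      ((∑ i ∈ Finset.range N, (a i + b i)) / (2 * N)) ^ 2) /
    ((∑ i ∈ Finset.range N, (a i ^ 2 + b i ^ 2)) / (2 * N) -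
      ((∑ i ∈ Finset.range N, (a i + b i)) / (2 * N)) ^ 2)) :
    (N : ℝ) * (yV / 2) ≤
        ∑ i ∈ Finset.range N, (a i * b i - c * (a i ^ 2 + b i ^ 2) / 2 + yV)
    ∨ (N : ℝ) * r ≤ ∑ i ∈ Finset.range N, (a i + b i) / 2
    ∨ (N : ℝ) * r ≤ ∑ i ∈ Finset.range N, -((a i + b i) / 2) := by
  rcases Nat.eq_zero_or_pos N with hN | hN
  · exfalso; subst hN; simp at h; linarith
  have hn : (0:ℝ) < N := by exact_mod_cast hN
  set A := ∑ i ∈ Finset.range N, a i * b i with hA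
  set B := ∑ i ∈ Finset.range N, (a i ^ 2 + b i ^ 2) with hB
  set Sm := ∑ i ∈ Finset.range N, (a i + b i) with hSm
  set m := Sm / (2 * N) with hm
  set D := B / (2 * N) - m ^ 2 with hD
  clear_value A B Sm m D
  -- Cauchy-Schwarz: Sm^2 ≤ 2 N B
  have hCS : Sm ^ 2 ≤ 2 * N * B := by
    have h1 : Sm ^ 2 ≤ (N : ℝ) * ∑ i ∈ Finset.range N, (a i + b i) ^ 2 := by
      have := sq_sum_le_card_mul_sum_sq (s := Finset.range N) (f := fun i => a i + b i)
      rw [hSm]; simpa using this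
    have h2 : ∑ i ∈ Finset.range N, (a i + b i) ^ 2 ≤ 2 * B := by
      rw [hB, Finset.mul_sum]
      exact Finset.sum_le_sum fun i _ => by nlinarith [sq_nonneg (a i - b i)]
    nlinarith
  have hD0 : 0 ≤ D := by
    have hmsq : m ^ 2 = Sm ^ 2 / ((2 * (N:ℝ)) ^ 2) := by rw [hm, div_pow]
    have h4 : Sm ^ 2 / ((2 * (N:ℝ)) ^ 2) ≤ B / (2 * N) := by
      rw [div_le_div_iff₀ (by positivity) (by positivity)]
      nlinarith
    rw [hD, hmsq]; linarith
  have hDne : D ≠ 0 := by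
    intro h0
    rw [hD] at h0
    rw [hD, h0, div_zero] at h
    linarith
  have hDpos : 0 < D := lt_of_le_of_ne hD0 (Ne.symm hDne)
  have hnne : (N:ℝ) ≠ 0 := hn.ne'
  have hmain : c * D ≤ A / N - m ^ 2 := (le_div_iff₀ hDpos).mp h
  have key : c * (B / 2 - (N:ℝ) * m ^ 2) ≤ A - (N:ℝ) * m ^ 2 := by
    have h2 : c * D * N ≤ (A / N - m ^ 2) * N := mul_le_mul_of_nonneg_right hmain hn.le
    have eD : D * (N:ℝ) = B / 2 - (N:ℝ) * m ^ 2 := by rw [hD]; field_simp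
    have eN : (A / (N:ℝ) - m ^ 2) * (N:ℝ) = A - (N:ℝ) * m ^ 2 := by field_simp
    rw [mul_assoc, eD, eN] at h2
    exact h2
  have hK : ∑ i ∈ Finset.range N, (a i * b i - c * (a i ^ 2 + b i ^ 2) / 2 + yV)
      = A - c * B / 2 + N * yV := by
    have e : ∀ i ∈ Finset.range N, a i * b i - c * (a i ^ 2 + b i ^ 2) / 2 + yV
        = a i * b i - c / 2 * (a i ^ 2 + b i ^ 2) + yV := fun i _ => by ring
    rw [Finset.sum_congr rfl e, Finset.sum_add_distrib, Finset.sum_sub_distrib,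
      ← Finset.mul_sum, Finset.sum_const, Finset.card_range, nsmul_eq_mul, ← hA, ← hB]
    ring
  have hKge : A - c * B / 2 ≥ -((N:ℝ) * ((c - 1) * m ^ 2)) := by nlinarith [key]
  by_cases hcase : (c - 1) * m ^ 2 ≤ yV / 2
  · left
    rw [hK]
    nlinarith [mul_le_mul_of_nonneg_left hcase hn.le]
  · right
    push_neg at hcase
    have hc1 : 0 < c - 1 := by
      rcases lt_or_eq_of_le (by linarith : (0:ℝ) ≤ c - 1) with h1 | h1
      · exact h1
      · exfalso; nlinarith
    have hrsq : r ^ 2 = yV / (2 * (c - 1)) := by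
      rw [hr, Real.sq_sqrt (by positivity)]
    have hr0 : 0 ≤ r := hr ▸ Real.sqrt_nonneg _
    have hm2 : r ^ 2 < m ^ 2 := by
      rw [hrsq, div_lt_iff₀ (by positivity)]
      linarith [hcase]
    have habs : r < |m| := lt_of_pow_lt_pow_left₀ 2 (abs_nonneg m) (by rw [sq_abs]; exact hm2)
    have hsum : ∑ i ∈ Finset.range N, (a i + b i) / 2 = (N:ℝ) * m := by
      have e1 : ∑ i ∈ Finset.range N, (a i + b i) / 2 = Sm / 2 := by
        rw [hSm, Finset.sum_div]
      rw [e1, hm, ← mul_div_assoc, mul_comm 2 (N:ℝ), mul_div_mul_left _ _ hnne]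
    rcases le_or_gt 0 m with hm0 | hm0
    · left
      rw [hsum]
      have : r < m := by rwa [abs_of_nonneg hm0] at habs
      exact mul_le_mul_of_nonneg_left this.le hn.le
    · right
      have hsum' : ∑ i ∈ Finset.range N, -((a i + b i) / 2) = (N:ℝ) * (-m) := by
        rw [Finset.sum_neg_distrib, hsum]; ring
      rw [hsum']
      have : r < -m := by rwa [abs_of_neg hm0] at habs
      exact mul_le_mul_of_nonneg_left this.le hn.le

lemma map_Xpf (ν : ∀ i, Measure (𝒳 i)) [∀ i, IsProbabilityMeasure (ν i)]
    (u : Finset (Fin p)) :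
    (pfMeasure ν).map (Xpf u) = Measure.pi ν := by
  refine (Measure.pi_eq fun s hs => ?_).symm
  rw [Measure.map_apply (measurable_Xpf u) (MeasurableSet.univ_pi hs)]
  have hpre : Xpf u ⁻¹' Set.pi Set.univ s =
      (Set.pi Set.univ fun i => if i ∈ u then s i else Set.univ) ×ˢ
      (Set.pi Set.univ fun i => if i ∈ u then Set.univ else s i) := by
    ext ⟨x, y⟩
    simp only [Set.mem_preimage, Set.mem_pi, Set.mem_univ, true_implies, Set.mem_prod, Xpf]
    constructor
    · intro h
      refine ⟨fun i => ?_, fun i => ?_⟩ <;> by_cases hi : i ∈ u <;> simp only [hi, if_true,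
        if_false, Set.mem_univ] <;> simpa [hi] using h i
    · rintro ⟨h1, h2⟩ i
      by_cases hi : i ∈ u
      · simpa [hi] using h1 i
      · simpa [hi] using h2 i
  rw [hpre]
  unfold pfMeasure
  rw [Measure.prod_prod, Measure.pi_pi, Measure.pi_pi, ← Finset.prod_mul_distrib]
  exact Finset.prod_congr rfl fun i _ => by by_cases hi : i ∈ u <;> simp [hi]

lemma map_fst_pf (ν : ∀ i, Measure (𝒳 i)) [∀ i, IsProbabilityMeasure (ν i)] :
    (pfMeasure ν).map Prod.fst = Measure.pi ν := by
  unfold pfMeasure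
  simp

/-- Decomposition of the upward deviation probability of `T^u_{N,Cl}`
into three elementary deviation probabilities. -/
theorem statement13
    {p : ℕ} {𝒳 : Fin p → Type*} [∀ i, MeasurableSpace (𝒳 i)]
    (ν : ∀ i, Measure (𝒳 i)) [∀ i, IsProbabilityMeasure (ν i)]
    (f : (∀ i, 𝒳 i) → ℝ) (hf : Measurable f)
    (hY2 : MemLp (Yout f) 2 (pfMeasure ν))
    (hVar : variance (Yout f) (pfMeasure ν) ≠ 0)
    (u : Finset (Fin p))
    {Ω' : Type*} [MeasurableSpace Ω'] (P : Measure Ω') [IsProbabilityMeasure P]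
    (W : ℕ → Ω' → ℝ × ℝ)
    (hindep : iIndepFun W P)
    (hident : ∀ i, IdentDistrib (W i) (fun ω => (Yout f ω, Ypf f u ω)) P (pfMeasure ν))
    (y : ℝ) (hy : 0 < y)
    (hcent : ∫ ω, Yout f ω ∂(pfMeasure ν) = 0)
    (N : ℕ)
    (V S EK : ℝ)
    (hV : V = variance (Yout f) (pfMeasure ν))
    (hS : S = SCl ν f u)
    (hSy : 0 ≤ S + y - 1)
    (hEK : EK = ∫ ω, (Yout f ω * Ypf f u ω -
      (S + y) * (Yout f ω ^ 2 + Ypf f u ω ^ 2) / 2) ∂(pfMeasure ν)) :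
    (P {ω' | S + y ≤ TN1 W N ω'}).toReal ≤
      (P {ω' | N * (y * V / 2) ≤
          ∑ i ∈ Finset.range N,
            ((W i ω').1 * (W i ω').2 -
              (S + y) * ((W i ω').1 ^ 2 + (W i ω').2 ^ 2) / 2 - EK)}).toReal
      + (P {ω' | N * Real.sqrt (y * V / (2 * (S + y - 1))) ≤
          ∑ i ∈ Finset.range N, ((W i ω').1 + (W i ω').2) / 2}).toReal
      + (P {ω' | N * Real.sqrt (y * V / (2 * (S + y - 1))) ≤
          ∑ i ∈ Finset.range N, -(((W i ω').1 + (W i ω').2) / 2)}).toReal := by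
  classical
  -- abbreviations
  set μ := pfMeasure ν with hμ
  have hVpos : 0 < V := by
    rw [hV]
    exact lt_of_le_of_ne (variance_nonneg _ _) (Ne.symm hVar)
  have hyV : 0 < y * V := mul_pos hy hVpos
  have hc : 1 ≤ S + y := by linarith
  -- `Ypf` is `f` composed with `Xpf`, measure-preservation facts
  have hfst : MemLp f 2 (Measure.pi ν) := by
    rw [← map_fst_pf ν]
    exact (memLp_map_measure_iff hf.aestronglyMeasurable measurable_fst.aemeasurable).mpr hY2
  have hYpf2 : MemLp (Ypf f u) 2 μ := by
    have : MemLp f 2 ((pfMeasure ν).map (Xpf u)) := by rw [map_Xpf ν u]; exact hfst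
    exact (memLp_map_measure_iff hf.aestronglyMeasurable
      (measurable_Xpf u).aemeasurable).mp this
  -- equality of second moments
  have hsq_eq : ∫ ω, Ypf f u ω ^ 2 ∂μ = ∫ ω, Yout f ω ^ 2 ∂μ := by
    have e1 : ∫ ω, Ypf f u ω ^ 2 ∂μ = ∫ x, f x ^ 2 ∂(Measure.pi ν) := by
      rw [← map_Xpf ν u, integral_map (measurable_Xpf u).aemeasurable
        ((hf.pow_const 2).aestronglyMeasurable)]
      rfl
    have e2 : ∫ ω, Yout f ω ^ 2 ∂μ = ∫ x, f x ^ 2 ∂(Measure.pi ν) := by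
      rw [← map_fst_pf ν, integral_map measurable_fst.aemeasurable
        ((hf.pow_const 2).aestronglyMeasurable)]
      rfl
    rw [e1, e2]
  have hV2 : ∫ ω, Yout f ω ^ 2 ∂μ = V := by
    have hvd := variance_eq_sub (μ := μ) hY2
    have : (∫ ω, (Yout f ^ 2) ω ∂μ) = ∫ ω, Yout f ω ^ 2 ∂μ := by
      simp [Pi.pow_apply]
    rw [hV, hvd, this, hcent]
    ring
  -- integrability facts
  have hIsq : Integrable (fun ω => Yout f ω ^ 2) μ := hY2.integrable_sq
  have hIsq' : Integrable (fun ω => Ypf f u ω ^ 2) μ := hYpf2.integrable_sq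
  have hIYY : Integrable (fun ω => Yout f ω * Ypf f u ω) μ := by
    refine Integrable.mono' ((hIsq.add hIsq').div_const 2)
      (((hf.comp measurable_fst).mul
        (hf.comp (measurable_Xpf u))).aestronglyMeasurable) (ae_of_all _ fun ω => ?_)
    have h1 : |Yout f ω| * |Ypf f u ω| ≤ (Yout f ω ^ 2 + Ypf f u ω ^ 2) / 2 := by
      nlinarith [sq_nonneg (|Yout f ω| - |Ypf f u ω|), sq_abs (Yout f ω), sq_abs (Ypf f u ω),
        abs_nonneg (Yout f ω), abs_nonneg (Ypf f u ω)]
    simpa [abs_mul] using h1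
  -- covariance value
  have hcovV : ∫ ω, Yout f ω * Ypf f u ω ∂μ = S * V := by
    have h1 : cov (pfMeasure ν) (Yout f) (Ypf f u) = ∫ ω, Yout f ω * Ypf f u ω ∂(pfMeasure ν) := by
      rw [cov, hcent]; ring
    rw [hμ, ← h1, hS, SCl, hV, div_mul_cancel₀ _ hVar]
  -- value of EK
  have hEKval : EK = -(y * V) := by
    rw [hEK]
    have e : (fun ω => Yout f ω * Ypf f u ω -
        (S + y) * (Yout f ω ^ 2 + Ypf f u ω ^ 2) / 2) =
        fun ω => Yout f ω * Ypf f u ω - (S + y) / 2 * (Yout f ω ^ 2 + Ypf f u ω ^ 2) := by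
      funext ω; ring
    have hIadd : Integrable (fun ω => Yout f ω ^ 2 + Ypf f u ω ^ 2) μ := hIsq.add hIsq'
    have hI2 : Integrable (fun ω => (S + y) / 2 * (Yout f ω ^ 2 + Ypf f u ω ^ 2)) μ :=
      hIadd.const_mul _
    rw [e, integral_sub hIYY hI2, integral_const_mul, integral_add hIsq hIsq',
      hsq_eq, hV2, hcovV]
    ring
  -- set inclusion
  set E1 := {ω' | (N : ℝ) * (y * V / 2) ≤
      ∑ i ∈ Finset.range N,
        ((W i ω').1 * (W i ω').2 -
          (S + y) * ((W i ω').1 ^ 2 + (W i ω').2 ^ 2) / 2 - EK)} with hE1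
  set E2 := {ω' | (N : ℝ) * Real.sqrt (y * V / (2 * (S + y - 1))) ≤
      ∑ i ∈ Finset.range N, ((W i ω').1 + (W i ω').2) / 2} with hE2
  set E3 := {ω' | (N : ℝ) * Real.sqrt (y * V / (2 * (S + y - 1))) ≤
      ∑ i ∈ Finset.range N, -(((W i ω').1 + (W i ω').2) / 2)} with hE3
  have hsub : {ω' | S + y ≤ TN1 W N ω'} ⊆ (E1 ∪ E2) ∪ E3 := by
    intro ω' hω'
    have hT : S + y ≤ ((∑ i ∈ Finset.range N, (W i ω').1 * (W i ω').2) / N -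
        ((∑ i ∈ Finset.range N, ((W i ω').1 + (W i ω').2)) / (2 * N)) ^ 2) /
      ((∑ i ∈ Finset.range N, ((W i ω').1 ^ 2 + (W i ω').2 ^ 2)) / (2 * N) -
        ((∑ i ∈ Finset.range N, ((W i ω').1 + (W i ω').2)) / (2 * N)) ^ 2) := hω'
    have hcore := core_real (S + y) (y * V) (Real.sqrt (y * V / (2 * (S + y - 1)))) N
      (fun i => (W i ω').1) (fun i => (W i ω').2) hc hyV rfl hT
    rcases hcore with h | h | h
    · left; left
      rw [hE1]
      simp only [Set.mem_setOf_eq, hEKval, sub_neg_eq_add]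
      exact h
    · left; right
      exact h
    · right
      exact h
  have hle : P {ω' | S + y ≤ TN1 W N ω'} ≤ P E1 + P E2 + P E3 :=
    calc P {ω' | S + y ≤ TN1 W N ω'} ≤ P ((E1 ∪ E2) ∪ E3) := measure_mono hsub
      _ ≤ P (E1 ∪ E2) + P E3 := measure_union_le _ _
      _ ≤ P E1 + P E2 + P E3 := add_le_add_left (measure_union_le _ _) _
  have h1 : (P {ω' | S + y ≤ TN1 W N ω'}).toReal ≤ (P E1 + P E2 + P E3).toReal :=
    ENNReal.toReal_mono (by finiteness) hle
  rw [ENNReal.toReal_add (by finiteness) (by finiteness),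
    ENNReal.toReal_add (by finiteness) (by finiteness)] at h1
  exact h1

end SobolPaper
end
end
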